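/- arXiv:1505.04053 — 3 statements merged into one kernel-verified Lean document; each statement's English description precedes it below -/
import Mathlib

section
/- Let (τ_k)_{k∈K} be a family of 1-Lipschitz functions τ_k : X → ℝ≥0 on a metric space X such that for every x ∈ X, τ̄(x) := Σ_k τ_k(x) ≥ ε > 0, only boundedly many τ_k are nonzero at each point, and each τ_k is bounded by its support diameter. Then each normalized function g_k(x) = τ_k(x)/τ̄(x) is Lipschitz with Lipschitz constant at most C/ε for a constant C depending only on the multiplicity bound and the bound sup τ_k ≤ M. -/
open scoped NNReal

/-- If `(τ k)` are 1-Lipschitz nonnegative functions, at most `m` nonzero at any point,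
each bounded by `M`, with pointwise sum at least `ε > 0`, then each normalized function
`g k = τ k / ∑ τ i` is `(C/ε)`-Lipschitz for a constant `C` depending only on `m` and `M`. -/
theorem stmt2 (m : ℕ) (M : ℝ≥0) :
    ∃ C : ℝ≥0, ∀ (X : Type) [MetricSpace X] (K : Type) (τ : K → X → ℝ≥0) (ε : ℝ≥0),
      0 < ε →
      (∀ k, LipschitzWith 1 (τ k)) →
      (∀ x : X, ({k | τ k x ≠ 0} : Set K).Finite ∧ ({k | τ k x ≠ 0} : Set K).ncard ≤ m) →
      (∀ k x, τ k x ≤ M) →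
      (∀ x : X, ε ≤ ∑ᶠ k, τ k x) →
      ∀ k, LipschitzWith (C / ε) (fun x => τ k x / ∑ᶠ i, τ i x) := by
  refine ⟨2 * m + 1, ?_⟩
  intro X _ K τ ε hε hlip hfin hM hsum k
  classical
  have hεR : (0 : ℝ) < ε := hε
  have hSx : ∀ x : X, (ε : ℝ) ≤ ((∑ᶠ i, τ i x : ℝ≥0) : ℝ) := fun x => hsum x
  have hSpos : ∀ x : X, (0 : ℝ) < ((∑ᶠ i, τ i x : ℝ≥0) : ℝ) :=
    fun x => lt_of_lt_of_le hεR (hSx x)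
  -- each term below the sum
  have hterm : ∀ x : X, (τ k x : ℝ) ≤ ((∑ᶠ i, τ i x : ℝ≥0) : ℝ) := by
    intro x
    exact_mod_cast single_le_finsum k ((hfin x).1.subset fun j hj => hj)
      (fun j => zero_le)
  -- pointwise Lipschitz bound for each τ
  have htau : ∀ (i : K) (x y : X), (τ i x : ℝ) ≤ (τ i y : ℝ) + dist x y := by
    intro i x y
    have h := (hlip i).dist_le_mul x y
    rw [NNReal.dist_eq, NNReal.coe_one, one_mul] at h
    linarith [(abs_sub_le_iff.mp h).1]
  -- the sum is (2m)-Lipschitz (in the real sense)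
  have hSlip : ∀ x y : X, ((∑ᶠ i, τ i x : ℝ≥0) : ℝ) ≤
      ((∑ᶠ i, τ i y : ℝ≥0) : ℝ) + (2 * m) * dist x y := by
    intro x y
    set A : Finset K := (hfin x).1.toFinset ∪ (hfin y).1.toFinset with hA
    have hsubx : Function.support (fun i => τ i x) ⊆ (A : Set K) := by
      intro i hi
      simp only [hA, Finset.coe_union, Set.mem_union, Set.Finite.coe_toFinset]
      exact Or.inl hi
    have hsuby : Function.support (fun i => τ i y) ⊆ (A : Set K) := by
      intro i hi
      simp only [hA, Finset.coe_union, Set.mem_union, Set.Finite.coe_toFinset]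
      exact Or.inr hi
    have hx : (∑ᶠ i, τ i x) = ∑ i ∈ A, τ i x := finsum_eq_sum_of_support_subset _ hsubx
    have hy : (∑ᶠ i, τ i y) = ∑ i ∈ A, τ i y := finsum_eq_sum_of_support_subset _ hsuby
    have hcard : (A.card : ℝ) ≤ 2 * m := by
      have h1 : (hfin x).1.toFinset.card ≤ m := by
        rw [← Set.ncard_eq_toFinset_card _ (hfin x).1]; exact (hfin x).2
      have h2 : (hfin y).1.toFinset.card ≤ m := by
        rw [← Set.ncard_eq_toFinset_card _ (hfin y).1]; exact (hfin y).2
      have h3 : A.card ≤ (hfin x).1.toFinset.card + (hfin y).1.toFinset.card :=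
        Finset.card_union_le _ _
      have : A.card ≤ 2 * m := by omega
      exact_mod_cast this
    have hxR : ((∑ᶠ i, τ i x : ℝ≥0) : ℝ) = ∑ i ∈ A, (τ i x : ℝ) := by
      rw [hx]; push_cast; rfl
    have hyR : ((∑ᶠ i, τ i y : ℝ≥0) : ℝ) = ∑ i ∈ A, (τ i y : ℝ) := by
      rw [hy]; push_cast; rfl
    rw [hxR, hyR]
    calc ∑ i ∈ A, (τ i x : ℝ) ≤ ∑ i ∈ A, ((τ i y : ℝ) + dist x y) :=
          Finset.sum_le_sum fun i _ => htau i x y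
      _ = (∑ i ∈ A, (τ i y : ℝ)) + A.card * dist x y := by
          rw [Finset.sum_add_distrib]; simp [mul_comm]
      _ ≤ (∑ i ∈ A, (τ i y : ℝ)) + (2 * m) * dist x y := by
          have := mul_le_mul_of_nonneg_right hcard (dist_nonneg (x := x) (y := y))
          linarith
  -- key one-sided estimate
  have key : ∀ x y : X, (τ k x : ℝ) / ((∑ᶠ i, τ i x : ℝ≥0) : ℝ) ≤
      (τ k y : ℝ) / ((∑ᶠ i, τ i y : ℝ≥0) : ℝ) + (2 * m + 1) / (ε : ℝ) * dist x y := by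
    intro x y
    have hdnn : (0 : ℝ) ≤ dist x y := dist_nonneg
    have hab : (τ k x : ℝ) ≤ (τ k y : ℝ) + dist x y := htau k x y
    have hsyx : ((∑ᶠ i, τ i y : ℝ≥0) : ℝ) ≤ ((∑ᶠ i, τ i x : ℝ≥0) : ℝ) + (2 * m) * dist x y := by
      have := hSlip y x; rwa [dist_comm y x] at this
    have hb : (τ k y : ℝ) ≤ ((∑ᶠ i, τ i y : ℝ≥0) : ℝ) := hterm y
    have hbnn : (0 : ℝ) ≤ (τ k y : ℝ) := (τ k y).coe_nonneg
    have hsx : (0 : ℝ) < ((∑ᶠ i, τ i x : ℝ≥0) : ℝ) := hSpos x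
    have hsy : (0 : ℝ) < ((∑ᶠ i, τ i y : ℝ≥0) : ℝ) := hSpos y
    have hεx : (ε : ℝ) ≤ ((∑ᶠ i, τ i x : ℝ≥0) : ℝ) := hSx x
    set a := (τ k x : ℝ)
    set b := (τ k y : ℝ)
    set sx := ((∑ᶠ i, τ i x : ℝ≥0) : ℝ)
    set sy := ((∑ᶠ i, τ i y : ℝ≥0) : ℝ)
    set d := dist x y
    have hcomb : b / sy + (2 * m + 1) / (ε : ℝ) * d
        = (b * ε + (2 * m + 1) * d * sy) / (sy * ε) := by
      field_simp
    rw [hcomb, div_le_div_iff₀ hsx (by positivity)]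
    nlinarith [mul_le_mul_of_nonneg_right hab (mul_nonneg hsy.le hεR.le),
      mul_le_mul_of_nonneg_right hsyx (mul_nonneg hbnn hεR.le),
      mul_le_mul_of_nonneg_right hb
        (mul_nonneg (mul_nonneg (by positivity : (0:ℝ) ≤ 2*m) hdnn) hεR.le),
      mul_le_mul_of_nonneg_left hεx
        (mul_nonneg (mul_nonneg (by positivity : (0:ℝ) ≤ 2*(m:ℝ)+1) hdnn) hsy.le)]
  -- conclude
  rw [lipschitzWith_iff_dist_le_mul]
  intro x y
  rw [NNReal.dist_eq]
  have hcoe : (((2 * m + 1 : ℝ≥0) / ε : ℝ≥0) : ℝ) = (2 * (m : ℝ) + 1) / (ε : ℝ) := by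
    push_cast [NNReal.coe_div]
    norm_num
  have h1 := key x y
  have h2 := key y x
  rw [dist_comm y x] at h2
  rw [hcoe, NNReal.coe_div, NNReal.coe_div, abs_sub_le_iff]
  constructor <;> linarith
end

section
/- Let Z be a metric space and suppose that for every Lipschitz map f : S^k → Z (k ≤ n) there is a Lipschitz extension to D^{k+1} with constant at most C·Lip(f) (Z is Lipschitz n-connected). Let f₀, f₁ : Δ^m → Z (m ≤ n) be Lipschitz maps with Lip(f_i) ≤ L and sup d(f₀(x), f₁(x)) ≤ L. Given a Lipschitz map P : ∂(Δ^m × [0,1]) → Z that equals f₀ on Δ^m × {0}, equals f₁ on Δ^m × {1}, and has Lip(P) ≤ L' on the sides, there exists a Lipschitz map p : Δ^m × [0,1] → Z extending P with Lip(p) ≤ C'·max(L, L'), where C' depends only on C, m, n. -/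
open scoped NNReal
open Metric Set Topology

namespace Stmt11Aux

theorem frac_diff_le {gu gv a b d r : ℝ} (hr : 0 < r) (ha : 0 < a) (hb : 0 < b)
    (hgu0 : 0 ≤ gu) (hgu : gu ≤ a / r) (hgd : |gu - gv| ≤ d / r) (habs : |a - b| ≤ d) :
    |gu / a - gv / b| * b ≤ 2 / r * d := by
  have hd : 0 ≤ d := le_trans (abs_nonneg _) habs
  have hnum : |gu * b - gv * a| ≤ 2 * d / r * a := by
    have key : gu * b - gv * a = gu * (b - a) + (gu - gv) * a := by ring
    rw [key]
    have h1 : |gu * (b - a)| ≤ (a / r) * d := by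
      rw [abs_mul, abs_of_nonneg hgu0]
      have : |b - a| ≤ d := by rw [abs_sub_comm]; exact habs
      exact mul_le_mul hgu this (abs_nonneg _) (by positivity)
    have h2 : |(gu - gv) * a| ≤ d / r * a := by
      rw [abs_mul, abs_of_pos ha]
      exact mul_le_mul_of_nonneg_right hgd ha.le
    calc |gu * (b - a) + (gu - gv) * a| ≤ |gu * (b - a)| + |(gu - gv) * a| := abs_add_le _ _
      _ ≤ (a / r) * d + d / r * a := add_le_add h1 h2
      _ = 2 * d / r * a := by ring
  have heq : gu / a - gv / b = (gu * b - gv * a) / (a * b) := by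
    field_simp
  rw [heq, abs_div, abs_of_pos (mul_pos ha hb)]
  have : |gu * b - gv * a| / (a * b) * b = |gu * b - gv * a| / a := by
    field_simp
  rw [this]
  rw [div_le_iff₀ ha]
  calc |gu * b - gv * a| ≤ 2 * d / r * a := hnum
    _ = 2 / r * d * a := by ring

theorem radial_out_lip {E : Type*} [NormedAddCommGroup E] [NormedSpace ℝ E]
    (g : E → ℝ) (r : ℝ) (hr : 0 < r) (hg0 : ∀ v, 0 ≤ g v)
    (hub : ∀ v, g v ≤ ‖v‖ / r) (hlip : ∀ u v, |g u - g v| ≤ ‖u - v‖ / r) (u v : E) :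
    ‖(g u / ‖u‖) • u - (g v / ‖v‖) • v‖ ≤ 3 / r * ‖u - v‖ := by
  have hnorm : ∀ w : E, ‖(g w / ‖w‖) • w‖ ≤ ‖w‖ / r := by
    intro w
    rcases eq_or_ne w 0 with h | h
    · simp [h]
    · have hw : 0 < ‖w‖ := norm_pos_iff.2 h
      rw [norm_smul, Real.norm_eq_abs, abs_of_nonneg (div_nonneg (hg0 w) (norm_nonneg w)),
        div_mul_cancel₀ _ hw.ne']
      exact hub w
  have h13 : (1:ℝ) / r ≤ 3 / r := by gcongr <;> norm_num
  rcases eq_or_ne u 0 with hu | hu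
  · rw [hu, zero_sub, norm_neg, norm_zero, div_zero, zero_smul, zero_sub, norm_neg]
    calc ‖(g v / ‖v‖) • v‖ ≤ ‖v‖ / r := hnorm v
      _ = 1 / r * ‖v‖ := by ring
      _ ≤ 3 / r * ‖v‖ := mul_le_mul_of_nonneg_right h13 (norm_nonneg v)
  rcases eq_or_ne v 0 with hv | hv
  · rw [hv, sub_zero, norm_zero, div_zero, zero_smul, sub_zero]
    calc ‖(g u / ‖u‖) • u‖ ≤ ‖u‖ / r := hnorm u
      _ = 1 / r * ‖u‖ := by ring
      _ ≤ 3 / r * ‖u‖ := mul_le_mul_of_nonneg_right h13 (norm_nonneg u)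
  have hun : 0 < ‖u‖ := norm_pos_iff.2 hu
  have hvn : 0 < ‖v‖ := norm_pos_iff.2 hv
  have hid : (g u / ‖u‖) • u - (g v / ‖v‖) • v
      = (g u / ‖u‖) • (u - v) + (g u / ‖u‖ - g v / ‖v‖) • v := by
    rw [smul_sub, sub_smul]; abel
  rw [hid]
  have h1 : ‖(g u / ‖u‖) • (u - v)‖ ≤ 1 / r * ‖u - v‖ := by
    rw [norm_smul, Real.norm_eq_abs, abs_of_nonneg (div_nonneg (hg0 u) (norm_nonneg u))]
    have : g u / ‖u‖ ≤ 1 / r := by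
      calc g u / ‖u‖ ≤ (‖u‖ / r) / ‖u‖ := by gcongr; exact hub u
        _ = 1 / r := by field_simp
    exact mul_le_mul_of_nonneg_right this (norm_nonneg _)
  have h2 : ‖(g u / ‖u‖ - g v / ‖v‖) • v‖ ≤ 2 / r * ‖u - v‖ := by
    rw [norm_smul, Real.norm_eq_abs]
    exact frac_diff_le hr hun hvn (hg0 u) (hub u) (hlip u v) (abs_norm_sub_norm_le u v)
  calc ‖(g u / ‖u‖) • (u - v) + (g u / ‖u‖ - g v / ‖v‖) • v‖
      ≤ ‖(g u / ‖u‖) • (u - v)‖ + ‖(g u / ‖u‖ - g v / ‖v‖) • v‖ := norm_add_le _ _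
    _ ≤ 1 / r * ‖u - v‖ + 2 / r * ‖u - v‖ := add_le_add h1 h2
    _ = 3 / r * ‖u - v‖ := by ring

theorem frac2_diff_le {a b gu gv d r R : ℝ} (hr : 0 < r) (hR : 0 < R)
    (hgu : 0 < gu) (hgv : 0 < gv) (hb : 0 < b) (ha0 : 0 ≤ a)
    (hua : a ≤ R * gu) (hvb : b ≤ R * gv) (hgd : |gu - gv| ≤ d / r) (habs : |a - b| ≤ d) :
    |a / gu - b / gv| * b ≤ (R + R ^ 2 / r) * d := by
  have hd : 0 ≤ d := le_trans (abs_nonneg _) habs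
  have hnum : |a * gv - b * gu| ≤ a * (d / r) + d * gu := by
    have key : a * gv - b * gu = a * (gv - gu) + (a - b) * gu := by ring
    rw [key]
    calc |a * (gv - gu) + (a - b) * gu| ≤ |a * (gv - gu)| + |(a - b) * gu| := abs_add_le _ _
      _ ≤ a * (d / r) + d * gu := by
          rw [abs_mul, abs_mul, abs_of_nonneg ha0, abs_of_pos hgu]
          have h1 : |gv - gu| ≤ d / r := by rw [abs_sub_comm]; exact hgd
          exact add_le_add (mul_le_mul_of_nonneg_left h1 ha0)
            (mul_le_mul_of_nonneg_right habs hgu.le)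
  have heq : a / gu - b / gv = (a * gv - b * gu) / (gu * gv) := by field_simp
  rw [heq, abs_div, abs_of_pos (mul_pos hgu hgv), div_mul_eq_mul_div, div_le_iff₀ (mul_pos hgu hgv)]
  calc |a * gv - b * gu| * b ≤ (a * (d / r) + d * gu) * (R * gv) :=
        mul_le_mul hnum hvb hb.le (by positivity)
    _ ≤ (R * gu * (d / r) + d * gu) * (R * gv) := by gcongr
    _ = (R + R ^ 2 / r) * d * (gu * gv) := by ring

theorem radial_in_lip {E : Type*} [NormedAddCommGroup E] [NormedSpace ℝ E]
    (g : E → ℝ) (r R : ℝ) (hr : 0 < r) (hR : 0 < R)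
    (hlb : ∀ v, ‖v‖ / R ≤ g v) (hlip : ∀ u v, |g u - g v| ≤ ‖u - v‖ / r) (u v : E) :
    ‖(‖u‖ / g u) • u - (‖v‖ / g v) • v‖ ≤ (2 * R + R ^ 2 / r) * ‖u - v‖ := by
  have hgpos : ∀ w : E, w ≠ 0 → 0 < g w := fun w hw =>
    lt_of_lt_of_le (div_pos (norm_pos_iff.2 hw) hR) (hlb w)
  have hratio : ∀ w : E, w ≠ 0 → ‖w‖ / g w ≤ R := by
    intro w hw
    rw [div_le_iff₀ (hgpos w hw)]
    have := hlb w
    rw [div_le_iff₀ hR] at this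
    linarith [this]
  have hnorm : ∀ w : E, ‖(‖w‖ / g w) • w‖ ≤ R * ‖w‖ := by
    intro w
    rcases eq_or_ne w 0 with h | h
    · simp [h]
    · rw [norm_smul, Real.norm_eq_abs,
        abs_of_nonneg (div_nonneg (norm_nonneg w) (hgpos w h).le)]
      exact mul_le_mul_of_nonneg_right (hratio w h) (norm_nonneg w)
  have hconst : R ≤ 2 * R + R ^ 2 / r := by nlinarith [div_nonneg (sq_nonneg R) hr.le]
  rcases eq_or_ne u 0 with hu | hu
  · rw [hu, zero_sub, norm_neg, norm_zero, zero_div, zero_smul, zero_sub, norm_neg]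
    calc ‖(‖v‖ / g v) • v‖ ≤ R * ‖v‖ := hnorm v
      _ ≤ (2 * R + R ^ 2 / r) * ‖v‖ := mul_le_mul_of_nonneg_right hconst (norm_nonneg v)
  rcases eq_or_ne v 0 with hv | hv
  · rw [hv, sub_zero, norm_zero, zero_div, zero_smul, sub_zero]
    calc ‖(‖u‖ / g u) • u‖ ≤ R * ‖u‖ := hnorm u
      _ ≤ (2 * R + R ^ 2 / r) * ‖u‖ := mul_le_mul_of_nonneg_right hconst (norm_nonneg u)
  have hun : 0 < ‖u‖ := norm_pos_iff.2 hu
  have hvn : 0 < ‖v‖ := norm_pos_iff.2 hv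
  have hid : (‖u‖ / g u) • u - (‖v‖ / g v) • v
      = (‖u‖ / g u) • (u - v) + (‖u‖ / g u - ‖v‖ / g v) • v := by
    rw [smul_sub, sub_smul]; abel
  rw [hid]
  have h1 : ‖(‖u‖ / g u) • (u - v)‖ ≤ R * ‖u - v‖ := by
    rw [norm_smul, Real.norm_eq_abs,
      abs_of_nonneg (div_nonneg (norm_nonneg u) (hgpos u hu).le)]
    exact mul_le_mul_of_nonneg_right (hratio u hu) (norm_nonneg _)
  have h2 : ‖(‖u‖ / g u - ‖v‖ / g v) • v‖ ≤ (R + R ^ 2 / r) * ‖u - v‖ := by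
    rw [norm_smul, Real.norm_eq_abs]
    have hua : ‖u‖ ≤ R * g u := by
      have := hlb u; rw [div_le_iff₀ hR] at this; linarith
    have hvb : ‖v‖ ≤ R * g v := by
      have := hlb v; rw [div_le_iff₀ hR] at this; linarith
    exact frac2_diff_le hr hR (hgpos u hu) (hgpos v hv) hvn (norm_nonneg u)
      hua hvb (hlip u v) (abs_norm_sub_norm_le u v)
  calc ‖(‖u‖ / g u) • (u - v) + (‖u‖ / g u - ‖v‖ / g v) • v‖
      ≤ ‖(‖u‖ / g u) • (u - v)‖ + ‖(‖u‖ / g u - ‖v‖ / g v) • v‖ := norm_add_le _ _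
    _ ≤ R * ‖u - v‖ + (R + R ^ 2 / r) * ‖u - v‖ := add_le_add h1 h2
    _ = (2 * R + R ^ 2 / r) * ‖u - v‖ := by ring
variable (m : ℕ)

/-- The convex body `Q × [0,1] ⊆ ℝ^{m+1}`: first `m` coordinates parametrize the simplex,
last coordinate is time. -/
def Bset : Set (EuclideanSpace ℝ (Fin (m + 1))) :=
  {y | (∀ j : Fin m, 0 ≤ y j.castSucc) ∧ (∑ j : Fin m, y j.castSucc) ≤ 1 ∧
    y (Fin.last m) ∈ Set.Icc (0 : ℝ) 1}

/-- Center point of `Bset`. -/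
noncomputable def cpt : EuclideanSpace ℝ (Fin (m + 1)) :=
  WithLp.toLp 2 (fun j => if j = Fin.last m then 1 / 2 else ((m : ℝ) + 1)⁻¹)

variable {m}

lemma cpt_castSucc (j : Fin m) : cpt m j.castSucc = ((m : ℝ) + 1)⁻¹ :=
  if_neg (Fin.castSucc_lt_last j).ne

lemma cpt_last : cpt m (Fin.last m) = 1 / 2 := if_pos rfl

lemma cpt_mem_Icc (j : Fin (m + 1)) : cpt m j ∈ Set.Icc (0 : ℝ) 1 := by
  unfold cpt
  show (if j = Fin.last m then (1:ℝ) / 2 else ((m : ℝ) + 1)⁻¹) ∈ _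
  split_ifs
  · norm_num
  · constructor
    · positivity
    · rw [inv_le_one_iff₀]; right; push_cast; linarith [Nat.cast_nonneg (α := ℝ) m]

lemma coord_mem_Icc {y : EuclideanSpace ℝ (Fin (m + 1))} (hy : y ∈ Bset m) (j : Fin (m + 1)) :
    y j ∈ Set.Icc (0 : ℝ) 1 := by
  obtain ⟨h1, h2, h3⟩ := hy
  induction j using Fin.lastCases with
  | last => exact h3
  | cast i =>
      refine ⟨h1 i, ?_⟩
      calc y i.castSucc ≤ ∑ j : Fin m, y j.castSucc :=
            Finset.single_le_sum (fun j _ => h1 j) (Finset.mem_univ i)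
        _ ≤ 1 := h2

lemma convex_Bset : Convex ℝ (Bset m) := by
  intro y hy z hz a b ha hb hab
  obtain ⟨hy1, hy2, hy3l, hy3r⟩ : _ ∧ _ ∧ _ ∧ _ := ⟨hy.1, hy.2.1, hy.2.2.1, hy.2.2.2⟩
  obtain ⟨hz1, hz2, hz3l, hz3r⟩ : _ ∧ _ ∧ _ ∧ _ := ⟨hz.1, hz.2.1, hz.2.2.1, hz.2.2.2⟩
  have happ : ∀ j, (a • y + b • z) j = a * y j + b * z j := fun j => rfl
  refine ⟨fun j => ?_, ?_, ?_, ?_⟩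
  · rw [happ]
    have := hy1 j; have := hz1 j
    nlinarith
  · simp only [happ]
    rw [Finset.sum_add_distrib, ← Finset.mul_sum, ← Finset.mul_sum]
    nlinarith
  · rw [happ]; nlinarith
  · rw [happ]; nlinarith

lemma isClosed_Bset : IsClosed (Bset m) := by
  have h1 : IsClosed {y : EuclideanSpace ℝ (Fin (m + 1)) | ∀ j : Fin m, 0 ≤ y j.castSucc} := by
    have : {y : EuclideanSpace ℝ (Fin (m + 1)) | ∀ j : Fin m, 0 ≤ y j.castSucc}
        = ⋂ j : Fin m, {y | 0 ≤ y j.castSucc} := by ext y; simp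
    rw [this]
    exact isClosed_iInter fun j =>
      isClosed_le continuous_const (EuclideanSpace.proj (j.castSucc : Fin (m + 1))).continuous
  have h2 : IsClosed {y : EuclideanSpace ℝ (Fin (m + 1)) | (∑ j : Fin m, y j.castSucc) ≤ 1} :=
    isClosed_le (continuous_finset_sum _ fun j _ =>
      (EuclideanSpace.proj (j.castSucc : Fin (m + 1))).continuous) continuous_const
  have h3 : IsClosed {y : EuclideanSpace ℝ (Fin (m + 1)) | y (Fin.last m) ∈ Set.Icc (0:ℝ) 1} :=
    (isClosed_Icc).preimage (EuclideanSpace.proj (Fin.last m)).continuous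
  exact h1.inter (h2.inter h3)

-- coordinate bound lemmas
lemma coord_le_norm (v : EuclideanSpace ℝ (Fin (m + 1))) (j : Fin (m + 1)) : |v j| ≤ ‖v‖ := by
  rw [EuclideanSpace.norm_eq, ← Real.sqrt_sq_eq_abs]
  apply Real.sqrt_le_sqrt
  have := Finset.single_le_sum (f := fun i => ‖v i‖ ^ 2) (fun i _ => by positivity)
    (Finset.mem_univ j)
  simpa [Real.norm_eq_abs, sq_abs] using this

lemma norm_le_of_coord {v : EuclideanSpace ℝ (Fin (m + 1))} {a : ℝ} (ha : 0 ≤ a)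
    (h : ∀ j, |v j| ≤ a) : ‖v‖ ≤ ((m : ℝ) + 1) * a := by
  rw [EuclideanSpace.norm_eq]
  have h1 : ∑ i, ‖v i‖ ^ 2 ≤ ∑ _i : Fin (m + 1), a ^ 2 := by
    apply Finset.sum_le_sum
    intro i _
    rw [Real.norm_eq_abs]
    exact pow_le_pow_left₀ (abs_nonneg _) (h i) 2
  have h2 : ∑ _i : Fin (m + 1), a ^ 2 = ((m : ℝ) + 1) * a ^ 2 := by
    rw [Finset.sum_const, Finset.card_univ, Fintype.card_fin, nsmul_eq_mul]; push_cast; ring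
  calc Real.sqrt (∑ i, ‖v i‖ ^ 2) ≤ Real.sqrt (((m : ℝ) + 1) * a ^ 2) := by
        apply Real.sqrt_le_sqrt; rw [← h2]; exact h1
    _ ≤ Real.sqrt ((((m : ℝ) + 1) * a) ^ 2) := by
        apply Real.sqrt_le_sqrt; nlinarith [Nat.cast_nonneg (α := ℝ) m, sq_nonneg a]
    _ = ((m : ℝ) + 1) * a := Real.sqrt_sq (by positivity)

/-- The translated body with the center at the origin. -/
def sset (m : ℕ) : Set (EuclideanSpace ℝ (Fin (m + 1))) := (fun v => cpt m + v) ⁻¹' Bset m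

lemma convex_sset : Convex ℝ (sset m) := convex_Bset.translate_preimage_right _
lemma isClosed_sset : IsClosed (sset m) :=
  isClosed_Bset.preimage (continuous_const.add continuous_id)

noncomputable def rr (m : ℕ) : ℝ := (((m : ℝ) + 2) * ((m : ℝ) + 2))⁻¹
noncomputable def RRc (m : ℕ) : ℝ := (m : ℝ) + 2
lemma rr_pos : 0 < rr m := by unfold rr; positivity
lemma RRc_pos : 0 < RRc m := by unfold RRc; positivity

lemma ball_subset_sset : Metric.ball 0 (rr m) ⊆ sset m := by
  intro v hv
  rw [mem_ball, dist_zero_right] at hv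
  have hvc : ∀ j, |v j| ≤ rr m := fun j => (coord_le_norm v j).trans hv.le
  have hM : (0:ℝ) ≤ (m:ℝ) := Nat.cast_nonneg m
  have hrr : rr m = (((m : ℝ) + 2) * ((m : ℝ) + 2))⁻¹ := rfl
  have hrpos := rr_pos (m := m)
  have happ : ∀ j, (cpt m + v) j = cpt m j + v j := fun j => rfl
  show cpt m + v ∈ Bset m
  refine ⟨fun j => ?_, ?_, ?_, ?_⟩
  · rw [happ, cpt_castSucc]
    have := hvc j.castSucc
    have h1 : rr m ≤ ((m:ℝ) + 1)⁻¹ := by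
      rw [hrr, inv_le_inv₀ (by positivity) (by positivity)]; nlinarith
    have := abs_le.1 this
    linarith [this.1]
  · simp only [happ]
    rw [Finset.sum_add_distrib]
    have hs1 : ∑ j : Fin m, cpt m j.castSucc = (m : ℝ) * ((m:ℝ)+1)⁻¹ := by
      simp [cpt_castSucc, Finset.sum_const, Finset.card_univ]
    have hs2 : ∑ j : Fin m, v j.castSucc ≤ (m : ℝ) * rr m := by
      calc ∑ j : Fin m, v j.castSucc ≤ ∑ _j : Fin m, rr m :=
            Finset.sum_le_sum fun j _ => (le_abs_self _).trans (hvc j.castSucc)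
        _ = (m : ℝ) * rr m := by simp [Finset.sum_const, Finset.card_univ]
    rw [hs1]
    have hkey : (m : ℝ) * ((m:ℝ)+1)⁻¹ + (m : ℝ) * rr m ≤ 1 := by
      rw [hrr]
      have e1 : (m:ℝ) * ((m:ℝ)+1)⁻¹ = (m:ℝ)/((m:ℝ)+1) := by ring
      have e2 : (m:ℝ) * (((m:ℝ)+2)*((m:ℝ)+2))⁻¹ = (m:ℝ)/(((m:ℝ)+2)*((m:ℝ)+2)) := by ring
      rw [e1, e2, div_add_div _ _ (by positivity : (0:ℝ) < (m:ℝ)+1).ne'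
        (by positivity : (0:ℝ) < ((m:ℝ)+2)*((m:ℝ)+2)).ne', div_le_one (by positivity)]
      nlinarith
    linarith
  · rw [happ, cpt_last]
    have := abs_le.1 (hvc (Fin.last m))
    have h1 : rr m ≤ 1/2 := by rw [hrr, inv_le_comm₀ (by positivity) (by norm_num)]; nlinarith
    linarith [this.1]
  · rw [happ, cpt_last]
    have := abs_le.1 (hvc (Fin.last m))
    have h1 : rr m ≤ 1/2 := by rw [hrr, inv_le_comm₀ (by positivity) (by norm_num)]; nlinarith
    linarith [this.2]
lemma sset_subset_closedBall : sset m ⊆ Metric.closedBall 0 (RRc m) := by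
  intro v hv
  have hB : cpt m + v ∈ Bset m := hv
  rw [mem_closedBall, dist_zero_right]
  have hvc : ∀ j, |v j| ≤ 1 := by
    intro j
    have h1 := coord_mem_Icc hB j
    have h2 := cpt_mem_Icc (m := m) j
    have : v j = (cpt m + v) j - cpt m j := by
      have : (cpt m + v) j = cpt m j + v j := rfl
      rw [this]; ring
    rw [this, abs_le]
    constructor <;> [linarith [h1.1, h2.2]; linarith [h1.2, h2.1]]
  calc ‖v‖ ≤ ((m : ℝ) + 1) * 1 := norm_le_of_coord (by norm_num) hvc
    _ ≤ RRc m := by unfold RRc; push_cast; linarith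

lemma isOpen_strict : IsOpen {y : EuclideanSpace ℝ (Fin (m + 1)) |
    (∀ j : Fin m, 0 < y j.castSucc) ∧ (∑ j : Fin m, y j.castSucc) < 1 ∧
    y (Fin.last m) ∈ Set.Ioo (0 : ℝ) 1} := by
  have h1 : IsOpen {y : EuclideanSpace ℝ (Fin (m + 1)) | ∀ j : Fin m, 0 < y j.castSucc} := by
    have : {y : EuclideanSpace ℝ (Fin (m + 1)) | ∀ j : Fin m, 0 < y j.castSucc}
        = ⋂ j : Fin m, {y | 0 < y j.castSucc} := by ext y; simp
    rw [this]
    exact isOpen_iInter_of_finite fun j =>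
      isOpen_lt continuous_const (EuclideanSpace.proj (j.castSucc : Fin (m + 1))).continuous
  have h2 : IsOpen {y : EuclideanSpace ℝ (Fin (m + 1)) | (∑ j : Fin m, y j.castSucc) < 1} :=
    isOpen_lt (continuous_finset_sum _ fun j _ =>
      (EuclideanSpace.proj (j.castSucc : Fin (m + 1))).continuous) continuous_const
  have h3 : IsOpen {y : EuclideanSpace ℝ (Fin (m + 1)) | y (Fin.last m) ∈ Set.Ioo (0:ℝ) 1} :=
    (isOpen_Ioo).preimage (EuclideanSpace.proj (Fin.last m)).continuous
  exact h1.inter (h2.inter h3)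

lemma single_pert_mem {y : EuclideanSpace ℝ (Fin (m + 1))} {ε : ℝ}
    (hball : Metric.ball y ε ⊆ Bset m) {i : Fin (m + 1)} {t : ℝ} (ht : |t| < ε) :
    y + EuclideanSpace.single i t ∈ Bset m := by
  apply hball
  rw [mem_ball]
  have h : dist (y + EuclideanSpace.single i t) y = ‖EuclideanSpace.single i t‖ := by
    rw [dist_eq_norm]; congr 1; abel
  rw [h, EuclideanSpace.norm_single, Real.norm_eq_abs]
  exact ht

lemma pert_apply (y : EuclideanSpace ℝ (Fin (m + 1))) (i j : Fin (m + 1)) (t : ℝ) :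
    (y + EuclideanSpace.single i t) j = y j + if j = i then t else 0 := by
  have : (y + EuclideanSpace.single i t) j = y j + EuclideanSpace.single i t j := rfl
  rw [this, EuclideanSpace.single_apply]

lemma mem_frontier_Bset_iff {y : EuclideanSpace ℝ (Fin (m + 1))} (hy : y ∈ Bset m) :
    y ∈ frontier (Bset m) ↔ (y (Fin.last m) = 0 ∨ y (Fin.last m) = 1 ∨
      (∃ j : Fin m, y j.castSucc = 0) ∨ (∑ j : Fin m, y j.castSucc) = 1) := by
  rw [isClosed_Bset.frontier_eq, Set.mem_diff]
  constructor
  · rintro ⟨-, hni⟩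
    by_contra hcon
    push_neg at hcon
    obtain ⟨h0, h1, h2, h3⟩ := hcon
    apply hni
    refine interior_maximal ?_ isOpen_strict ?_
    · rintro z ⟨hz1, hz2, hz3⟩
      exact ⟨fun j => le_of_lt (hz1 j), le_of_lt hz2, le_of_lt hz3.1, le_of_lt hz3.2⟩
    · exact ⟨fun j => lt_of_le_of_ne (hy.1 j) (Ne.symm (h2 j)), lt_of_le_of_ne hy.2.1 h3,
        lt_of_le_of_ne hy.2.2.1 (Ne.symm h0), lt_of_le_of_ne hy.2.2.2 h1⟩
  · intro hdisj
    refine ⟨hy, fun hint => ?_⟩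
    obtain ⟨ε, hε, hball⟩ := Metric.isOpen_iff.1 isOpen_interior y hint
    replace hball : Metric.ball y ε ⊆ Bset m := hball.trans interior_subset
    have hδ : |(-(ε/2))| < ε := by rw [abs_neg, abs_of_pos (by linarith)]; linarith
    have hδ' : |ε/2| < ε := by rw [abs_of_pos (by linarith)]; linarith
    rcases hdisj with h | h | ⟨i, h⟩ | h
    · have hmem := single_pert_mem hball (i := Fin.last m) hδ
      have := hmem.2.2.1
      rw [pert_apply, if_pos rfl, h] at this
      linarith
    · have hmem := single_pert_mem hball (i := Fin.last m) hδ'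
      have := hmem.2.2.2
      rw [pert_apply, if_pos rfl, h] at this
      linarith
    · have hmem := single_pert_mem hball (i := i.castSucc) hδ
      have := hmem.1 i
      rw [pert_apply, if_pos rfl, h] at this
      linarith
    · rcases Nat.eq_zero_or_pos m with hm0 | hm0
      · subst hm0
        simp at h
      · set i₀ : Fin m := ⟨0, hm0⟩
        have hmem := single_pert_mem hball (i := i₀.castSucc) hδ'
        have hsum := hmem.2.1
        have : ∑ j : Fin m, (y + EuclideanSpace.single i₀.castSucc (ε/2)) j.castSucc
            = (∑ j : Fin m, y j.castSucc) + ε/2 := by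
          simp only [pert_apply]
          rw [Finset.sum_add_distrib]
          congr 1
          have : ∀ j : Fin m, (if j.castSucc = i₀.castSucc then ε/2 else 0)
              = if j = i₀ then ε/2 else 0 := by
            intro j; simp [Fin.castSucc_inj]
          simp only [this]
          simp
        rw [this, h] at hsum
        linarith
def pmap (m : ℕ) : EuclideanSpace ℝ (Fin (m + 1)) × ℝ → EuclideanSpace ℝ (Fin (m + 1)) :=
  fun p => WithLp.toLp 2 (Fin.snoc (fun j : Fin m => p.1 j.castSucc) p.2 : Fin (m + 1) → ℝ)

noncomputable def amap (m : ℕ) :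
    EuclideanSpace ℝ (Fin (m + 1)) → EuclideanSpace ℝ (Fin (m + 1)) × ℝ :=
  fun y => (WithLp.toLp 2 (Fin.snoc (fun j : Fin m => y j.castSucc)
      (1 - ∑ j : Fin m, y j.castSucc) : Fin (m + 1) → ℝ),
    y (Fin.last m))

lemma pmap_castSucc (p : EuclideanSpace ℝ (Fin (m + 1)) × ℝ) (j : Fin m) :
    pmap m p j.castSucc = p.1 j.castSucc := by
  show (Fin.snoc (fun j : Fin m => p.1 j.castSucc) p.2 : Fin (m + 1) → ℝ) j.castSucc = _
  exact Fin.snoc_castSucc _ _ _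

lemma pmap_last (p : EuclideanSpace ℝ (Fin (m + 1)) × ℝ) :
    pmap m p (Fin.last m) = p.2 := by
  show (Fin.snoc (fun j : Fin m => p.1 j.castSucc) p.2 : Fin (m + 1) → ℝ) (Fin.last m) = _
  exact Fin.snoc_last _ _

lemma pmap_dist (p q : EuclideanSpace ℝ (Fin (m + 1)) × ℝ) :
    ‖pmap m p - pmap m q‖ ≤ ((m : ℝ) + 2) * dist p q := by
  have hd : 0 ≤ dist p q := dist_nonneg
  have hcoord : ∀ j : Fin (m + 1), |(pmap m p - pmap m q) j| ≤ dist p q := by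
    intro j
    have happ : (pmap m p - pmap m q) j = pmap m p j - pmap m q j := rfl
    rw [happ]
    induction j using Fin.lastCases with
    | last =>
        rw [pmap_last, pmap_last, ← Real.dist_eq]
        rw [Prod.dist_eq]; exact le_max_right _ _
    | cast i =>
        rw [pmap_castSucc, pmap_castSucc]
        have h1 : |p.1 i.castSucc - q.1 i.castSucc| ≤ ‖p.1 - q.1‖ := by
          have : p.1 i.castSucc - q.1 i.castSucc = (p.1 - q.1) i.castSucc := rfl
          rw [this]; exact coord_le_norm _ _
        have h2 : ‖p.1 - q.1‖ ≤ dist p q := by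
          rw [← dist_eq_norm, Prod.dist_eq]; exact le_max_left _ _
        linarith
  calc ‖pmap m p - pmap m q‖ ≤ ((m : ℝ) + 1) * dist p q := norm_le_of_coord hd hcoord
    _ ≤ ((m : ℝ) + 2) * dist p q := by nlinarith

lemma amap_dist (y z : EuclideanSpace ℝ (Fin (m + 1))) :
    dist (amap m y) (amap m z) ≤ (((m : ℝ) + 2) ^ 2) * ‖y - z‖ := by
  have hn : 0 ≤ ‖y - z‖ := norm_nonneg _
  have hM : (0:ℝ) ≤ (m:ℝ) := Nat.cast_nonneg m
  rw [Prod.dist_eq]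
  apply max_le
  · rw [dist_eq_norm]
    have hcoord : ∀ j : Fin (m + 1), |((amap m y).1 - (amap m z).1) j|
        ≤ ((m : ℝ) + 1) * ‖y - z‖ := by
      intro j
      have happ : ((amap m y).1 - (amap m z).1) j = (amap m y).1 j - (amap m z).1 j := rfl
      rw [happ]
      induction j using Fin.lastCases with
      | last =>
          have e1 : (amap m y).1 (Fin.last m) = 1 - ∑ j : Fin m, y j.castSucc := by
            show (Fin.snoc (fun j : Fin m => y j.castSucc)
              (1 - ∑ j : Fin m, y j.castSucc) : Fin (m+1) → ℝ) (Fin.last m) = _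
            rw [Fin.snoc_last]
          have e2 : (amap m z).1 (Fin.last m) = 1 - ∑ j : Fin m, z j.castSucc := by
            show (Fin.snoc (fun j : Fin m => z j.castSucc)
              (1 - ∑ j : Fin m, z j.castSucc) : Fin (m+1) → ℝ) (Fin.last m) = _
            rw [Fin.snoc_last]
          rw [e1, e2]
          have : (1 - ∑ j : Fin m, y j.castSucc) - (1 - ∑ j : Fin m, z j.castSucc)
              = ∑ j : Fin m, (z - y) j.castSucc := by
            have hc : ∀ j : Fin m, (z - y) j.castSucc = z j.castSucc - y j.castSucc :=
              fun _ => rfl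
            simp only [hc]
            rw [Finset.sum_sub_distrib]
            ring
          rw [this]
          calc |∑ j : Fin m, (z - y) j.castSucc| ≤ ∑ j : Fin m, |(z - y) j.castSucc| :=
                Finset.abs_sum_le_sum_abs _ _
            _ ≤ ∑ _j : Fin m, ‖z - y‖ := Finset.sum_le_sum fun j _ => coord_le_norm _ _
            _ = (m : ℝ) * ‖z - y‖ := by
                rw [Finset.sum_const, Finset.card_univ, Fintype.card_fin, nsmul_eq_mul]
            _ = (m : ℝ) * ‖y - z‖ := by rw [norm_sub_rev]
            _ ≤ ((m : ℝ) + 1) * ‖y - z‖ := by nlinarith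
      | cast i =>
          have e1 : (amap m y).1 i.castSucc = y i.castSucc := by
            show (Fin.snoc (fun j : Fin m => y j.castSucc)
              (1 - ∑ j : Fin m, y j.castSucc) : Fin (m+1) → ℝ) i.castSucc = _
            rw [Fin.snoc_castSucc]
          have e2 : (amap m z).1 i.castSucc = z i.castSucc := by
            show (Fin.snoc (fun j : Fin m => z j.castSucc)
              (1 - ∑ j : Fin m, z j.castSucc) : Fin (m+1) → ℝ) i.castSucc = _
            rw [Fin.snoc_castSucc]
          rw [e1, e2]
          have h1 : y i.castSucc - z i.castSucc = (y - z) i.castSucc := rfl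
          rw [h1]
          calc |(y - z) i.castSucc| ≤ ‖y - z‖ := coord_le_norm _ _
            _ ≤ ((m : ℝ) + 1) * ‖y - z‖ := by nlinarith
    calc ‖(amap m y).1 - (amap m z).1‖ ≤ ((m : ℝ) + 1) * (((m : ℝ) + 1) * ‖y - z‖) :=
          norm_le_of_coord (by positivity) hcoord
      _ ≤ (((m : ℝ) + 2) ^ 2) * ‖y - z‖ := by nlinarith
  · show dist (y (Fin.last m)) (z (Fin.last m)) ≤ _
    rw [Real.dist_eq]
    have h1 : y (Fin.last m) - z (Fin.last m) = (y - z) (Fin.last m) := rfl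
    rw [h1]
    calc |(y - z) (Fin.last m)| ≤ ‖y - z‖ := coord_le_norm _ _
      _ ≤ (((m : ℝ) + 2) ^ 2) * ‖y - z‖ := by
          nlinarith [mul_nonneg (by nlinarith : (0:ℝ) ≤ ((m:ℝ)+2)^2 - 1) hn]

lemma amap_pmap {x : EuclideanSpace ℝ (Fin (m + 1))} {t : ℝ}
    (hx : ∑ j, x j = 1) : amap m (pmap m (x, t)) = (x, t) := by
  have hlast : (1 : ℝ) - ∑ j : Fin m, x j.castSucc = x (Fin.last m) := by
    rw [Fin.sum_univ_castSucc] at hx; linarith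
  refine Prod.ext ?_ ?_
  · show WithLp.toLp 2 (Fin.snoc (fun j : Fin m => pmap m (x, t) j.castSucc)
      (1 - ∑ j : Fin m, pmap m (x, t) j.castSucc) : Fin (m+1) → ℝ) = x
    have he : (fun j : Fin m => pmap m (x, t) j.castSucc) = fun j : Fin m => x j.castSucc := by
      funext j; exact pmap_castSucc _ j
    have he2 : ∑ j : Fin m, pmap m (x, t) j.castSucc = ∑ j : Fin m, x j.castSucc := by
      apply Finset.sum_congr rfl; intro j _; exact pmap_castSucc _ j
    rw [he2, he, hlast]
    refine PiLp.ext fun j => ?_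
    induction j using Fin.lastCases with
    | last =>
      show (Fin.snoc (fun j : Fin m => x j.castSucc) (x (Fin.last m)) : Fin (m + 1) → ℝ)
        (Fin.last m) = _
      exact Fin.snoc_last _ _
    | cast i =>
      show (Fin.snoc (fun j : Fin m => x j.castSucc) (x (Fin.last m)) : Fin (m + 1) → ℝ)
        i.castSucc = _
      exact Fin.snoc_castSucc _ _ _
  · exact pmap_last _
lemma amap_fst_castSucc (y : EuclideanSpace ℝ (Fin (m + 1))) (i : Fin m) :
    (amap m y).1 i.castSucc = y i.castSucc := by
  show (Fin.snoc (fun j : Fin m => y j.castSucc)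
    (1 - ∑ j : Fin m, y j.castSucc) : Fin (m+1) → ℝ) i.castSucc = _
  rw [Fin.snoc_castSucc]

lemma amap_fst_last (y : EuclideanSpace ℝ (Fin (m + 1))) :
    (amap m y).1 (Fin.last m) = 1 - ∑ j : Fin m, y j.castSucc := by
  show (Fin.snoc (fun j : Fin m => y j.castSucc)
    (1 - ∑ j : Fin m, y j.castSucc) : Fin (m+1) → ℝ) (Fin.last m) = _
  rw [Fin.snoc_last]

def simplexSet (m : ℕ) : Set (EuclideanSpace ℝ (Fin (m + 1))) :=
  {x | (∀ j, 0 ≤ x j) ∧ ∑ j, x j = 1}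

def bdrySet (m : ℕ) : Set (EuclideanSpace ℝ (Fin (m + 1)) × ℝ) :=
  (simplexSet m ×ˢ ({0, 1} : Set ℝ)) ∪
    ({x | ((∀ j, 0 ≤ x j) ∧ ∑ j, x j = 1) ∧ ∃ j, x j = 0} ×ˢ Set.Icc (0 : ℝ) 1)

lemma pmap_mem_Bset {x : EuclideanSpace ℝ (Fin (m + 1))} {t : ℝ}
    (hx : x ∈ simplexSet m) (ht : t ∈ Set.Icc (0:ℝ) 1) : pmap m (x, t) ∈ Bset m := by
  obtain ⟨hx1, hx2⟩ := hx
  have hsum : ∑ j : Fin m, x j.castSucc = 1 - x (Fin.last m) := by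
    rw [Fin.sum_univ_castSucc] at hx2; linarith
  refine ⟨fun j => ?_, ?_, ?_⟩
  · rw [pmap_castSucc]; exact hx1 j.castSucc
  · have : ∑ j : Fin m, pmap m (x, t) j.castSucc = ∑ j : Fin m, x j.castSucc :=
      Finset.sum_congr rfl fun j _ => pmap_castSucc _ j
    rw [this, hsum]
    linarith [hx1 (Fin.last m)]
  · rw [pmap_last]; exact ht

lemma bdry_simplex {p : EuclideanSpace ℝ (Fin (m + 1)) × ℝ} (hp : p ∈ bdrySet m) :
    p.1 ∈ simplexSet m ∧ p.2 ∈ Set.Icc (0:ℝ) 1 := by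
  rcases hp with ⟨hx, ht⟩ | ⟨hx, ht⟩
  · refine ⟨hx, ?_⟩
    rcases ht with h | h <;> rw [h] <;> norm_num
  · exact ⟨hx.1, ht⟩

lemma pmap_bdry {p : EuclideanSpace ℝ (Fin (m + 1)) × ℝ} (hp : p ∈ bdrySet m) :
    pmap m p ∈ Bset m ∧ (pmap m p (Fin.last m) = 0 ∨ pmap m p (Fin.last m) = 1 ∨
      (∃ j : Fin m, pmap m p j.castSucc = 0) ∨ (∑ j : Fin m, pmap m p j.castSucc) = 1) := by
  obtain ⟨x, t⟩ := p
  obtain ⟨hx, ht⟩ := bdry_simplex hp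
  refine ⟨pmap_mem_Bset hx ht, ?_⟩
  rcases hp with ⟨-, hts⟩ | ⟨⟨-, ⟨j, hj⟩⟩, -⟩
  · rcases hts with h | h
    · left; rw [pmap_last]; exact h
    · right; left; rw [pmap_last]; exact h
  · induction j using Fin.lastCases with
    | last =>
        right; right; right
        have : ∑ j : Fin m, pmap m (x, t) j.castSucc = ∑ j : Fin m, x j.castSucc :=
          Finset.sum_congr rfl fun j _ => pmap_castSucc _ j
        rw [this]
        have hx2 : ∑ j : Fin (m + 1), x j = 1 := hx.2
        rw [Fin.sum_univ_castSucc] at hx2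
        have hj' : x (Fin.last m) = 0 := hj
        linarith
    | cast i =>
        right; right; left
        exact ⟨i, by rw [pmap_castSucc]; exact hj⟩

lemma amap_mem_simplex {y : EuclideanSpace ℝ (Fin (m + 1))} (hy : y ∈ Bset m) :
    (amap m y).1 ∈ simplexSet m := by
  constructor
  · intro j
    induction j using Fin.lastCases with
    | last => rw [amap_fst_last]; linarith [hy.2.1]
    | cast i => rw [amap_fst_castSucc]; exact hy.1 i
  · rw [Fin.sum_univ_castSucc, amap_fst_last]
    have : ∑ i : Fin m, (amap m y).1 i.castSucc = ∑ i : Fin m, y i.castSucc :=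
      Finset.sum_congr rfl fun i _ => amap_fst_castSucc y i
    rw [this]; ring

lemma amap_bdry {y : EuclideanSpace ℝ (Fin (m + 1))} (hy : y ∈ Bset m)
    (hdisj : y (Fin.last m) = 0 ∨ y (Fin.last m) = 1 ∨
      (∃ j : Fin m, y j.castSucc = 0) ∨ (∑ j : Fin m, y j.castSucc) = 1) :
    amap m y ∈ bdrySet m := by
  have hxs := amap_mem_simplex hy
  have hsnd : (amap m y).2 = y (Fin.last m) := rfl
  rcases hdisj with h | h | ⟨i, h⟩ | h
  · left
    refine ⟨hxs, ?_⟩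
    rw [hsnd, h]; left; rfl
  · left
    refine ⟨hxs, ?_⟩
    rw [hsnd, h]; right; rfl
  · right
    refine ⟨⟨hxs, ⟨i.castSucc, ?_⟩⟩, ?_⟩
    · rw [amap_fst_castSucc]; exact h
    · rw [hsnd]; exact hy.2.2
  · right
    refine ⟨⟨hxs, ⟨Fin.last m, ?_⟩⟩, ?_⟩
    · rw [amap_fst_last, h]; ring
    · rw [hsnd]; exact hy.2.2
noncomputable def gg (m : ℕ) : EuclideanSpace ℝ (Fin (m + 1)) → ℝ := gauge (sset m)

lemma absorbent_sset : Absorbent ℝ (sset m) :=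
  (absorbent_ball_zero rr_pos).mono ball_subset_sset

lemma sset_mem_nhds : sset m ∈ 𝓝 (0 : EuclideanSpace ℝ (Fin (m + 1))) :=
  Filter.mem_of_superset (ball_mem_nhds 0 rr_pos) ball_subset_sset

lemma gg_nonneg (v : EuclideanSpace ℝ (Fin (m + 1))) : 0 ≤ gg m v := gauge_nonneg v

lemma gg_zero : gg m 0 = 0 := gauge_zero

lemma gg_ub (v : EuclideanSpace ℝ (Fin (m + 1))) : gg m v ≤ ‖v‖ / rr m :=
  (gauge_mono (absorbent_ball_zero rr_pos) ball_subset_sset v).trans_eq (gauge_ball rr_pos.le v)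

lemma gg_lb (v : EuclideanSpace ℝ (Fin (m + 1))) : ‖v‖ / RRc m ≤ gg m v :=
  le_gauge_of_subset_closedBall absorbent_sset RRc_pos.le sset_subset_closedBall

lemma gg_lip (u v : EuclideanSpace ℝ (Fin (m + 1))) : |gg m u - gg m v| ≤ ‖u - v‖ / rr m := by
  have hcoe : ((rr m).toNNReal : ℝ) = rr m := Real.coe_toNNReal _ rr_pos.le
  have h := convex_sset.lipschitzWith_gauge (r := (rr m).toNNReal)
    (Real.toNNReal_pos.2 rr_pos) (by rw [hcoe]; exact ball_subset_sset)
  have h2 := h.dist_le_mul u v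
  rw [Real.dist_eq, dist_eq_norm, NNReal.coe_inv, hcoe] at h2
  calc |gg m u - gg m v| ≤ (rr m)⁻¹ * ‖u - v‖ := h2
    _ = ‖u - v‖ / rr m := by ring

lemma gg_le_one_iff (v : EuclideanSpace ℝ (Fin (m + 1))) : gg m v ≤ 1 ↔ v ∈ sset m := by
  constructor
  · intro h
    have := (gauge_le_one_iff_mem_closure convex_sset sset_mem_nhds).1 h
    rwa [isClosed_sset.closure_eq] at this
  · exact gauge_le_one_of_mem

lemma gg_one_iff (v : EuclideanSpace ℝ (Fin (m + 1))) :
    gg m v = 1 ↔ cpt m + v ∈ frontier (Bset m) := by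
  have hfr : frontier (sset m) = (fun v => cpt m + v) ⁻¹' frontier (Bset m) := by
    have h := (Homeomorph.addLeft (cpt m)).preimage_frontier (Bset m)
    have h2 : ⇑(Homeomorph.addLeft (cpt m)) ⁻¹' Bset m = sset m := rfl
    rw [h2] at h
    rw [← h]
    rfl
  rw [show gg m v = gauge (sset m) v from rfl,
    gauge_eq_one_iff_mem_frontier convex_sset sset_mem_nhds, hfr]
  rfl

lemma gg_smul {a : ℝ} (ha : 0 ≤ a) (v : EuclideanSpace ℝ (Fin (m + 1))) :
    gg m (a • v) = a * gg m v := by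
  rw [show gg m (a • v) = gauge (sset m) (a • v) from rfl, gauge_smul_of_nonneg ha]
  rfl

lemma norm_radial (v : EuclideanSpace ℝ (Fin (m + 1))) :
    ‖(gg m v / ‖v‖) • v‖ = gg m v := by
  rcases eq_or_ne v 0 with h | h
  · rw [h, smul_zero, norm_zero, gg_zero]
  · have hv : 0 < ‖v‖ := norm_pos_iff.2 h
    rw [norm_smul, Real.norm_eq_abs, abs_of_nonneg (div_nonneg (gg_nonneg v) hv.le),
      div_mul_cancel₀ _ hv.ne']

lemma gg_mem_sset {v : EuclideanSpace ℝ (Fin (m + 1))} (h : gg m v ≤ 1) :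
    cpt m + v ∈ Bset m := (gg_le_one_iff v).1 h

lemma gg_le_one_of_mem {v : EuclideanSpace ℝ (Fin (m + 1))} (h : cpt m + v ∈ Bset m) :
    gg m v ≤ 1 := (gg_le_one_iff v).2 h

noncomputable def phiMap (m : ℕ) (q : EuclideanSpace ℝ (Fin (m + 1)) × ℝ) :
    EuclideanSpace ℝ (Fin (m + 1)) :=
  (gg m (pmap m q - cpt m) / ‖pmap m q - cpt m‖) • (pmap m q - cpt m)

noncomputable def psiMap (m : ℕ) (w : EuclideanSpace ℝ (Fin (m + 1))) :
    EuclideanSpace ℝ (Fin (m + 1)) × ℝ :=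
  amap m (cpt m + (‖w‖ / gg m w) • w)

lemma phi_dist (q q' : EuclideanSpace ℝ (Fin (m + 1)) × ℝ) :
    ‖phiMap m q - phiMap m q'‖ ≤ 3 / rr m * (((m : ℝ) + 2) * dist q q') := by
  have h := radial_out_lip (gg m) (rr m) rr_pos gg_nonneg gg_ub gg_lip
    (pmap m q - cpt m) (pmap m q' - cpt m)
  rw [sub_sub_sub_cancel_right] at h
  calc ‖phiMap m q - phiMap m q'‖ ≤ 3 / rr m * ‖pmap m q - pmap m q'‖ := h
    _ ≤ 3 / rr m * (((m : ℝ) + 2) * dist q q') := by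
        exact mul_le_mul_of_nonneg_left (pmap_dist q q')
          (div_nonneg (by norm_num) rr_pos.le)

lemma psi_dist (w w' : EuclideanSpace ℝ (Fin (m + 1))) :
    dist (psiMap m w) (psiMap m w')
      ≤ (((m : ℝ) + 2) ^ 2) * ((2 * RRc m + RRc m ^ 2 / rr m) * dist w w') := by
  have h := radial_in_lip (gg m) (rr m) (RRc m) rr_pos RRc_pos gg_lb gg_lip w w'
  calc dist (psiMap m w) (psiMap m w')
      ≤ (((m : ℝ) + 2) ^ 2) * ‖(cpt m + (‖w‖ / gg m w) • w) - (cpt m + (‖w'‖ / gg m w') • w')‖ :=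
        amap_dist _ _
    _ ≤ (((m : ℝ) + 2) ^ 2) * ((2 * RRc m + RRc m ^ 2 / rr m) * dist w w') := by
        rw [add_sub_add_left_eq_sub, dist_eq_norm]
        apply mul_le_mul_of_nonneg_left h
        positivity

lemma psi_mem_bdry {w : EuclideanSpace ℝ (Fin (m + 1))} (hw : ‖w‖ = 1) :
    psiMap m w ∈ bdrySet m := by
  have hw0 : w ≠ 0 := fun h => by rw [h, norm_zero] at hw; norm_num at hw
  have hgw : 0 < gg m w := lt_of_lt_of_le (div_pos (by rw [hw]; norm_num) RRc_pos) (gg_lb w)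
  have hgu : gg m ((‖w‖ / gg m w) • w) = 1 := by
    rw [gg_smul (div_nonneg (norm_nonneg w) hgw.le), hw, div_mul_cancel₀ _ hgw.ne']
  have hBmem : cpt m + (‖w‖ / gg m w) • w ∈ Bset m := gg_mem_sset hgu.le
  have hfront : cpt m + (‖w‖ / gg m w) • w ∈ frontier (Bset m) := (gg_one_iff _).1 hgu
  exact amap_bdry hBmem ((mem_frontier_Bset_iff hBmem).1 hfront)

lemma phi_mem_ball {q : EuclideanSpace ℝ (Fin (m + 1)) × ℝ} (hB : pmap m q ∈ Bset m) :
    ‖phiMap m q‖ ≤ 1 := by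
  rw [show phiMap m q = (gg m (pmap m q - cpt m) / ‖pmap m q - cpt m‖) • (pmap m q - cpt m)
    from rfl, norm_radial]
  apply gg_le_one_of_mem
  have : cpt m + (pmap m q - cpt m) = pmap m q := by abel
  rwa [this]

lemma phi_psi {q : EuclideanSpace ℝ (Fin (m + 1)) × ℝ} (hq : q ∈ bdrySet m) :
    ‖phiMap m q‖ = 1 ∧ psiMap m (phiMap m q) = q := by
  obtain ⟨hqB, hqdisj⟩ := pmap_bdry hq
  set v : EuclideanSpace ℝ (Fin (m + 1)) := pmap m q - cpt m with hv
  have hcv : cpt m + v = pmap m q := by rw [hv]; abel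
  have hgv : gg m v = 1 := (gg_one_iff v).2 (by rw [hcv]; exact (mem_frontier_Bset_iff hqB).2 hqdisj)
  have hvne : v ≠ 0 := fun h => by rw [h, gg_zero] at hgv; norm_num at hgv
  have hvn : 0 < ‖v‖ := norm_pos_iff.2 hvne
  have hphi : phiMap m q = (gg m v / ‖v‖) • v := rfl
  have hnorm : ‖phiMap m q‖ = 1 := by rw [hphi, norm_radial, hgv]
  refine ⟨hnorm, ?_⟩
  have hgphi : gg m (phiMap m q) = ‖v‖⁻¹ := by
    rw [hphi, gg_smul (div_nonneg (gg_nonneg v) hvn.le), hgv]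
    field_simp
  have hscal : (‖phiMap m q‖ / gg m (phiMap m q)) • phiMap m q = v := by
    rw [hnorm, hgphi, hphi, hgv, smul_smul]
    rw [one_div, inv_inv, one_div]
    rw [mul_inv_cancel₀ hvn.ne', one_smul]
  have : psiMap m (phiMap m q) = amap m (pmap m q) := by
    rw [psiMap, hscal, hcv]
  rw [this]
  obtain ⟨x, t⟩ := q
  exact amap_pmap (bdry_simplex hq).1.2
end Stmt11Aux

/-- If `Z` is Lipschitz `n`-connected with constant `C`, `m ≤ n`, `f₀, f₁` are
`L`-Lipschitz maps of the standard `m`-simplex into `Z` at uniform distance at most `L`,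
and `P` is an `L'`-Lipschitz map on the boundary of the prism `Δ^m × [0,1]` restricting
to `f₀` and `f₁` on top and bottom, then `P` extends to a `C'·max(L,L')`-Lipschitz map
on the whole prism, with `C'` depending only on `C`, `m`, `n`. -/
theorem stmt11 (n m : ℕ) (hm : m ≤ n) (C : ℝ≥0) :
    ∃ C' : ℝ≥0, ∀ (Z : Type) (_ : MetricSpace Z),
      (∀ k ≤ n, ∀ (lam : ℝ≥0) (f : EuclideanSpace ℝ (Fin (k + 1)) → Z),
        LipschitzOnWith lam f (Metric.sphere 0 1) →
        ∃ F : EuclideanSpace ℝ (Fin (k + 1)) → Z,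
          LipschitzOnWith (C * lam) F (Metric.closedBall 0 1) ∧
          Set.EqOn F f (Metric.sphere 0 1)) →
      ∀ (L L' : ℝ≥0) (f₀ f₁ : EuclideanSpace ℝ (Fin (m + 1)) → Z)
        (P : EuclideanSpace ℝ (Fin (m + 1)) × ℝ → Z),
        LipschitzOnWith L f₀
          {x : EuclideanSpace ℝ (Fin (m + 1)) | (∀ j, 0 ≤ x j) ∧ ∑ j, x j = 1} →
        LipschitzOnWith L f₁
          {x : EuclideanSpace ℝ (Fin (m + 1)) | (∀ j, 0 ≤ x j) ∧ ∑ j, x j = 1} →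
        (∀ x ∈ {x : EuclideanSpace ℝ (Fin (m + 1)) | (∀ j, 0 ≤ x j) ∧ ∑ j, x j = 1},
          dist (f₀ x) (f₁ x) ≤ L) →
        LipschitzOnWith L' P
          (({x : EuclideanSpace ℝ (Fin (m + 1)) | (∀ j, 0 ≤ x j) ∧ ∑ j, x j = 1} ×ˢ
              ({0, 1} : Set ℝ)) ∪
            ({x : EuclideanSpace ℝ (Fin (m + 1)) |
                ((∀ j, 0 ≤ x j) ∧ ∑ j, x j = 1) ∧ ∃ j, x j = 0} ×ˢ
              Set.Icc (0 : ℝ) 1)) →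
        (∀ x ∈ {x : EuclideanSpace ℝ (Fin (m + 1)) | (∀ j, 0 ≤ x j) ∧ ∑ j, x j = 1},
          P (x, 0) = f₀ x ∧ P (x, 1) = f₁ x) →
        ∃ p : EuclideanSpace ℝ (Fin (m + 1)) × ℝ → Z,
          LipschitzOnWith (C' * max L L') p
            ({x : EuclideanSpace ℝ (Fin (m + 1)) | (∀ j, 0 ≤ x j) ∧ ∑ j, x j = 1} ×ˢ
              Set.Icc (0 : ℝ) 1) ∧
          Set.EqOn p P
            (({x : EuclideanSpace ℝ (Fin (m + 1)) | (∀ j, 0 ≤ x j) ∧ ∑ j, x j = 1} ×ˢ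
                ({0, 1} : Set ℝ)) ∪
              ({x : EuclideanSpace ℝ (Fin (m + 1)) |
                  ((∀ j, 0 ≤ x j) ∧ ∑ j, x j = 1) ∧ ∃ j, x j = 0} ×ˢ
                Set.Icc (0 : ℝ) 1)) := by
  classical
  have hr := Stmt11Aux.rr_pos (m := m)
  have hR := Stmt11Aux.RRc_pos (m := m)
  set lamK : ℝ := (((m:ℝ)+2)^2) * (2 * Stmt11Aux.RRc m + Stmt11Aux.RRc m ^ 2 / Stmt11Aux.rr m)
    with hlamKdef
  set phiK : ℝ := 3 / Stmt11Aux.rr m * ((m:ℝ)+2) with hphiKdef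
  have hlamK0 : 0 ≤ lamK := by
    apply mul_nonneg (by positivity)
    have h1 : 0 ≤ Stmt11Aux.RRc m ^ 2 / Stmt11Aux.rr m := div_nonneg (sq_nonneg _) hr.le
    linarith [hR.le]
  have hphiK0 : 0 ≤ phiK := mul_nonneg (div_nonneg (by norm_num) hr.le) (by positivity)
  refine ⟨C * lamK.toNNReal * phiK.toNNReal, ?_⟩
  intro Z instZ hconn L L' f₀ f₁ P hf₀ hf₁ hdist hP hPtb
  have hP' : ∀ p ∈ Stmt11Aux.bdrySet m, ∀ q ∈ Stmt11Aux.bdrySet m,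
      dist (P p) (P q) ≤ (L' : ℝ) * dist p q := lipschitzOnWith_iff_dist_le_mul.1 hP
  have hflip : LipschitzOnWith (L' * lamK.toNNReal) (fun w => P (Stmt11Aux.psiMap m w))
      (Metric.sphere 0 1) := by
    rw [lipschitzOnWith_iff_dist_le_mul]
    intro w hw w' hw'
    have hw1 : ‖w‖ = 1 := by rwa [mem_sphere_zero_iff_norm] at hw
    have hw1' : ‖w'‖ = 1 := by rwa [mem_sphere_zero_iff_norm] at hw'
    have hm1 := Stmt11Aux.psi_mem_bdry (m := m) hw1
    have hm2 := Stmt11Aux.psi_mem_bdry (m := m) hw1'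
    have h1 := hP' _ hm1 _ hm2
    have h2 := Stmt11Aux.psi_dist (m := m) w w'
    have hcoe : ((L' * lamK.toNNReal : ℝ≥0) : ℝ) = (L' : ℝ) * lamK := by
      rw [NNReal.coe_mul, Real.coe_toNNReal _ hlamK0]
    rw [hcoe]
    calc dist (P (Stmt11Aux.psiMap m w)) (P (Stmt11Aux.psiMap m w'))
        ≤ (L' : ℝ) * dist (Stmt11Aux.psiMap m w) (Stmt11Aux.psiMap m w') := h1
      _ ≤ (L' : ℝ) * (lamK * dist w w') := by
          apply mul_le_mul_of_nonneg_left _ L'.coe_nonneg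
          calc dist (Stmt11Aux.psiMap m w) (Stmt11Aux.psiMap m w')
              ≤ (((m:ℝ)+2)^2) * ((2 * Stmt11Aux.RRc m + Stmt11Aux.RRc m ^ 2 / Stmt11Aux.rr m)
                  * dist w w') := h2
            _ = lamK * dist w w' := by rw [hlamKdef]; ring
      _ = (L' : ℝ) * lamK * dist w w' := by ring
  obtain ⟨F, hF, hFeq⟩ := hconn m hm (L' * lamK.toNNReal) _ hflip
  have hF' := lipschitzOnWith_iff_dist_le_mul.1 hF
  refine ⟨fun q => F (Stmt11Aux.phiMap m q), ?_, ?_⟩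
  · rw [lipschitzOnWith_iff_dist_le_mul]
    intro q hq q' hq'
    have hqB : Stmt11Aux.pmap m q ∈ Stmt11Aux.Bset m := by
      have := Stmt11Aux.pmap_mem_Bset (m := m) hq.1 hq.2
      rwa [Prod.mk.eta] at this
    have hqB' : Stmt11Aux.pmap m q' ∈ Stmt11Aux.Bset m := by
      have := Stmt11Aux.pmap_mem_Bset (m := m) hq'.1 hq'.2
      rwa [Prod.mk.eta] at this
    have hb1 : Stmt11Aux.phiMap m q ∈ Metric.closedBall (0 : EuclideanSpace ℝ (Fin (m+1))) 1 := by
      rw [mem_closedBall_zero_iff]; exact Stmt11Aux.phi_mem_ball hqB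
    have hb1' : Stmt11Aux.phiMap m q' ∈ Metric.closedBall (0 : EuclideanSpace ℝ (Fin (m+1))) 1 := by
      rw [mem_closedBall_zero_iff]; exact Stmt11Aux.phi_mem_ball hqB'
    have h1 := hF' _ hb1 _ hb1'
    have h2 := Stmt11Aux.phi_dist (m := m) q q'
    have hcoe2 : ((C * (L' * lamK.toNNReal) : ℝ≥0) : ℝ) = (C : ℝ) * ((L' : ℝ) * lamK) := by
      rw [NNReal.coe_mul, NNReal.coe_mul, Real.coe_toNNReal _ hlamK0]
    have hcoe3 : ((C * lamK.toNNReal * phiK.toNNReal * (max L L') : ℝ≥0) : ℝ)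
        = (C : ℝ) * lamK * phiK * max (L : ℝ) (L' : ℝ) := by
      rw [NNReal.coe_mul, NNReal.coe_mul, NNReal.coe_mul, Real.coe_toNNReal _ hlamK0,
        Real.coe_toNNReal _ hphiK0, NNReal.coe_max]
    calc dist (F (Stmt11Aux.phiMap m q)) (F (Stmt11Aux.phiMap m q'))
        ≤ (C : ℝ) * ((L' : ℝ) * lamK) * dist (Stmt11Aux.phiMap m q) (Stmt11Aux.phiMap m q') := by
          rw [← hcoe2]; exact h1
      _ ≤ (C : ℝ) * ((L' : ℝ) * lamK) * (phiK * dist q q') := by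
          apply mul_le_mul_of_nonneg_left _
            (mul_nonneg C.coe_nonneg (mul_nonneg L'.coe_nonneg hlamK0))
          calc dist (Stmt11Aux.phiMap m q) (Stmt11Aux.phiMap m q')
              = ‖Stmt11Aux.phiMap m q - Stmt11Aux.phiMap m q'‖ := dist_eq_norm _ _
            _ ≤ 3 / Stmt11Aux.rr m * (((m:ℝ)+2) * dist q q') := h2
            _ = phiK * dist q q' := by rw [hphiKdef]; ring
      _ = (C : ℝ) * lamK * phiK * (L' : ℝ) * dist q q' := by ring
      _ ≤ (C : ℝ) * lamK * phiK * max (L : ℝ) (L' : ℝ) * dist q q' := by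
          apply mul_le_mul_of_nonneg_right _ dist_nonneg
          exact mul_le_mul_of_nonneg_left (le_max_right _ _)
            (mul_nonneg (mul_nonneg C.coe_nonneg hlamK0) hphiK0)
      _ = ((C * lamK.toNNReal * phiK.toNNReal * (max L L') : ℝ≥0) : ℝ) * dist q q' := by
          rw [hcoe3]
  · intro q hq
    have hphi := Stmt11Aux.phi_psi (m := m) hq
    have hsph : Stmt11Aux.phiMap m q ∈ Metric.sphere (0 : EuclideanSpace ℝ (Fin (m+1))) 1 := by
      rw [mem_sphere_zero_iff_norm]; exact hphi.1
    show F (Stmt11Aux.phiMap m q) = P q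
    rw [hFeq hsph]
    show P (Stmt11Aux.psiMap m (Stmt11Aux.phiMap m q)) = P q
    rw [hphi.2]
end

section
/- Let g : Z → Σ ⊆ ℓ²(K) be given by g(z) = Σ_k g_k(z)·e_k where (g_k) is an L-Lipschitz partition of unity with multiplicity at most n+1. Then g is Lipschitz with constant at most √(2(n+1))·L. -/
open scoped NNReal ENNReal

/-- If `(g k)` is a partition of unity on `Z` by `L`-Lipschitz functions with at most
`n+1` nonzero at any point, then the map `z ↦ (g k z)_k ∈ ℓ²(K)` is Lipschitz with
constant `√(2(n+1))·L`. -/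
theorem stmt15 {Z K : Type*} [MetricSpace Z] (n : ℕ) (L : ℝ≥0)
    (g : K → Z → ℝ) (hnn : ∀ k z, 0 ≤ g k z)
    (hlip : ∀ k, LipschitzWith L (g k))
    (hfin : ∀ z : Z, ({k | g k z ≠ 0} : Set K).Finite ∧
      ({k | g k z ≠ 0} : Set K).ncard ≤ n + 1)
    (hsum : ∀ z : Z, HasSum (fun k => g k z) 1)
    (hmem : ∀ z : Z, Memℓp (fun k => g k z) 2) :
    LipschitzWith (Real.toNNReal (Real.sqrt (2 * (n + 1))) * L)
      (fun z => (⟨fun k => g k z, hmem z⟩ : lp (fun _ : K => ℝ) 2)) := by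
  rw [lipschitzWith_iff_dist_le_mul]
  intro z w
  set x : lp (fun _ : K => ℝ) 2 := ⟨fun k => g k z, hmem z⟩
  set y : lp (fun _ : K => ℝ) 2 := ⟨fun k => g k w, hmem w⟩
  have hS : ({k | g k z ≠ 0} ∪ {k | g k w ≠ 0} : Set K).Finite :=
    (hfin z).1.union (hfin w).1
  have hcard : hS.toFinset.card ≤ 2 * (n + 1) := by
    rw [← Set.ncard_eq_toFinset_card _ hS]
    calc ({k | g k z ≠ 0} ∪ {k | g k w ≠ 0} : Set K).ncard
        ≤ ({k | g k z ≠ 0} : Set K).ncard + ({k | g k w ≠ 0} : Set K).ncard :=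
          Set.ncard_union_le _ _
      _ ≤ (n + 1) + (n + 1) := add_le_add (hfin z).2 (hfin w).2
      _ = 2 * (n + 1) := by ring
  have hcoe : ∀ k, (x - y : lp (fun _ : K => ℝ) 2) k = g k z - g k w := by
    intro k
    simp [x, y]
    rfl
  have hzero : ∀ k ∉ hS.toFinset, ‖(x - y : lp (fun _ : K => ℝ) 2) k‖ ^ (2 : ℝ) = 0 := by
    intro k hk
    simp only [Set.Finite.mem_toFinset, Set.mem_union, Set.mem_setOf_eq, not_or,
      not_not] at hk
    rw [hcoe k, hk.1, hk.2]
    simp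
  have hterm : ∀ k, ‖(x - y : lp (fun _ : K => ℝ) 2) k‖ ^ (2 : ℝ)
      ≤ ((L : ℝ) * dist z w) ^ 2 := by
    intro k
    rw [hcoe k, Real.rpow_two]
    have h1 : ‖g k z - g k w‖ ≤ (L : ℝ) * dist z w := by
      have := (hlip k).dist_le_mul z w
      rwa [Real.dist_eq] at this
    exact pow_le_pow_left₀ (norm_nonneg _) h1 2
  have hdist : dist x y = (∑' k, ‖(x - y : lp (fun _ : K => ℝ) 2) k‖ ^ (2 : ℝ)) ^ (1 / (2 : ℝ)) := by
    rw [dist_eq_norm, lp.norm_eq_tsum_rpow (by norm_num : 0 < (2 : ℝ≥0∞).toReal)]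
    norm_num [ENNReal.toReal_ofNat]
  have htsum : (∑' k, ‖(x - y : lp (fun _ : K => ℝ) 2) k‖ ^ (2 : ℝ))
      ≤ (2 * (n + 1)) * ((L : ℝ) * dist z w) ^ 2 := by
    rw [tsum_eq_sum hzero]
    calc ∑ k ∈ hS.toFinset, ‖(x - y : lp (fun _ : K => ℝ) 2) k‖ ^ (2 : ℝ)
        ≤ ∑ _k ∈ hS.toFinset, ((L : ℝ) * dist z w) ^ 2 :=
          Finset.sum_le_sum fun k _ => hterm k
      _ = hS.toFinset.card * ((L : ℝ) * dist z w) ^ 2 := by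
          rw [Finset.sum_const, nsmul_eq_mul]
      _ ≤ (2 * (n + 1)) * ((L : ℝ) * dist z w) ^ 2 := by
          gcongr
          exact_mod_cast hcard
  have hnonneg : (0 : ℝ) ≤ ∑' k, ‖(x - y : lp (fun _ : K => ℝ) 2) k‖ ^ (2 : ℝ) :=
    tsum_nonneg fun k => Real.rpow_nonneg (norm_nonneg _) _
  rw [hdist]
  calc (∑' k, ‖(x - y : lp (fun _ : K => ℝ) 2) k‖ ^ (2 : ℝ)) ^ (1 / (2 : ℝ))
      ≤ ((2 * (n + 1)) * ((L : ℝ) * dist z w) ^ 2) ^ (1 / (2 : ℝ)) :=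
        Real.rpow_le_rpow hnonneg htsum (by norm_num)
    _ = Real.sqrt ((2 * (n + 1)) * ((L : ℝ) * dist z w) ^ 2) := by
        rw [← Real.sqrt_eq_rpow]
    _ = ↑(Real.toNNReal (Real.sqrt (2 * (n + 1))) * L) * dist z w := by
        rw [Real.sqrt_mul (by positivity), Real.sqrt_sq (by positivity)]
        push_cast
        rw [Real.coe_toNNReal _ (Real.sqrt_nonneg _)]
        ring
end
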